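/- For ℓ ≥ 1 and μ ∈ ℂ, the ℓ×ℓ symmetric pencil J^s_ℓ(μ), which has entries 1 on the positions (i, ℓ−i) for i = 1,…,ℓ−1 and entries λ−μ on the anti-diagonal positions (i, ℓ+1−i) for i = 1,…,ℓ, is the limit as m → ∞ of the pencils J^s_ℓ(μ) + (1/m)·E_{ℓℓ}, and each pencil J^s_ℓ(μ) + (1/m)·E_{ℓℓ} (for m ∈ ℕ) has ℓ distinct eigenvalues, each with algebraic multiplicity one (i.e., its determinant, as a polynomial in λ of degree ℓ, has ℓ distinct roots). -/

import Mathlib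

open Matrix Filter Polynomial

private lemma aux_det_bidiag (n : ℕ) (d c : Polynomial ℂ) :
    (Matrix.of fun i j : Fin (n+1) =>
      (if (i : ℕ) = (j : ℕ) then d else if (i : ℕ) + 1 = (j : ℕ) then 1 else 0) +
      (if (i : ℕ) = n ∧ (j : ℕ) = 0 then c else 0)).det
    = d ^ (n+1) + (-1) ^ n * c := by
  set T : Matrix (Fin (n+1)) (Fin (n+1)) (Polynomial ℂ) :=
    Matrix.of fun i j => if (i : ℕ) = (j : ℕ) then d else if (i : ℕ) + 1 = (j : ℕ) then 1 else 0
    with hT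
  have hM : (Matrix.of fun i j : Fin (n+1) =>
      (if (i : ℕ) = (j : ℕ) then d else if (i : ℕ) + 1 = (j : ℕ) then 1 else 0) +
      (if (i : ℕ) = n ∧ (j : ℕ) = 0 then c else 0))
      = T.updateRow (Fin.last n) (T (Fin.last n) + (Pi.single 0 c : Fin (n+1) → Polynomial ℂ)) := by
    ext i j
    by_cases hi : i = Fin.last n
    · subst hi
      simp only [Matrix.updateRow_self, Pi.add_apply, Matrix.of_apply, hT]
      have : (Pi.single 0 c : Fin (n+1) → Polynomial ℂ) j = if (j : ℕ) = 0 then c else 0 := by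
        simp only [Pi.single_apply, Fin.ext_iff, Fin.val_zero]
      rw [this]
      simp [Fin.val_last]
    · rw [Matrix.updateRow_ne hi]
      simp only [Matrix.of_apply, hT]
      have : ¬ ((i : ℕ) = n ∧ (j : ℕ) = 0) := by
        rintro ⟨h1, -⟩
        exact hi (Fin.ext (by simpa using h1))
      rw [if_neg this, add_zero]
  rw [hM, Matrix.det_updateRow_add, Matrix.updateRow_eq_self]
  have hdetT : T.det = d ^ (n+1) := by
    rw [Matrix.det_of_upperTriangular (by
      intro i j hij
      have hij' : (j : ℕ) < (i : ℕ) := hij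
      simp only [hT, Matrix.of_apply]
      rw [if_neg (by omega), if_neg (by omega)])]
    simp [hT]
  have hdetT' : (T.updateRow (Fin.last n) ((Pi.single 0 c : Fin (n+1) → Polynomial ℂ))).det = (-1) ^ n * c := by
    rw [Matrix.det_succ_row _ (Fin.last n)]
    rw [Finset.sum_eq_single (0 : Fin (n+1))]
    · rw [Matrix.updateRow_self]
      have h0 : (Pi.single 0 c : Fin (n+1) → Polynomial ℂ) 0 = c := by simp
      rw [h0]
      have hminor : ((T.updateRow (Fin.last n) ((Pi.single 0 c : Fin (n+1) → Polynomial ℂ))).submatrix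
          (Fin.last n).succAbove (0 : Fin (n+1)).succAbove).det = 1 := by
        rw [Matrix.det_of_lowerTriangular _ (by
          intro i j hij
          have hij2 : (i : ℕ) < (j : ℕ) := hij
          simp only [Matrix.submatrix_apply, Fin.succAbove_last, Fin.zero_succAbove]
          rw [Matrix.updateRow_ne (Fin.castSucc_lt_last i).ne]
          simp only [hT, Matrix.of_apply, Fin.coe_castSucc, Fin.val_succ]
          rw [if_neg (by omega), if_neg (by omega)])]
        have hone : ∀ i : Fin n, T.updateRow (Fin.last n) ((Pi.single 0 c : Fin (n+1) → Polynomial ℂ)) i.castSucc i.succ = 1 := by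
          intro i
          rw [Matrix.updateRow_ne (Fin.castSucc_lt_last i).ne]
          simp only [hT, Matrix.of_apply, Fin.coe_castSucc, Fin.val_succ]
          rw [if_neg (by omega)]
          simp
        simp only [Matrix.submatrix_apply, Fin.succAbove_last, Fin.zero_succAbove]
        exact Finset.prod_eq_one fun i _ => hone i
      rw [hminor]
      simp [Fin.val_last]
    · intro j _ hj
      rw [Matrix.updateRow_self]
      have h0 : (Pi.single 0 c : Fin (n+1) → Polynomial ℂ) j = 0 := by
        simp [Pi.single_apply, hj]
      rw [h0, mul_zero, zero_mul]
    · intro h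
      exact absurd (Finset.mem_univ _) h
  rw [hdetT, hdetT']


private lemma aux_poly (k : ℕ) (hk : 1 ≤ k) (μ a : ℂ) (ha : a ≠ 0) :
    ((X - C μ) ^ k + C a).natDegree = k ∧
    ((X - C μ) ^ k + C a).roots.toFinset.card = k := by
  set q : Polynomial ℂ := (X - C μ) ^ k + C a with hq
  have hdeg : q.natDegree = k := by
    rw [hq, natDegree_add_C, natDegree_pow, natDegree_X_sub_C, mul_one]
  have hnroot : ¬ (X - C μ) ∣ q := by
    rw [dvd_iff_isRoot]
    simp [hq, IsRoot, zero_pow (by omega : k ≠ 0), ha]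
  have hcop : IsCoprime q (X - C μ) :=
    (((irreducible_X_sub_C μ).coprime_iff_not_dvd).mpr hnroot).symm
  have hCk : IsCoprime q (C (k : ℂ)) := by
    refine ⟨0, C ((k : ℂ))⁻¹, ?_⟩
    rw [zero_mul, zero_add, ← C_mul, inv_mul_cancel₀ (by exact_mod_cast Nat.cast_ne_zero.mpr (by omega)), C_1]
  have hsep : q.Separable := by
    rw [Polynomial.separable_def]
    have hd : derivative q = C (k : ℂ) * (X - C μ) ^ (k - 1) := by
      rw [hq]
      simp [derivative_pow]
    rw [hd]
    exact hCk.mul_right (hcop.pow_right)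
  have hnodup : q.roots.Nodup := Polynomial.nodup_roots hsep
  constructor
  · exact hdeg
  · rw [Multiset.toFinset_card_of_nodup hnodup, ← hdeg]
    exact splits_iff_card_roots.mp (IsAlgClosed.splits q)





/-- The symmetric Jordan-like pencil `J^s_ℓ(μ)` is the limit of the perturbed pencils
`J^s_ℓ(μ) + (1/m)·E_{ℓℓ}`, and each perturbed pencil (for `m ≥ 1`) is regular with `ℓ`
distinct eigenvalues, each of algebraic multiplicity one: its determinant is a polynomial
in `λ` of degree `ℓ` with `ℓ` distinct roots. -/
theorem stmt6 (ℓ : ℕ) (hℓ : 1 ≤ ℓ) (μ : ℂ) :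
    -- coefficient of λ in J^s_ℓ(μ): ones on the main anti-diagonal
    let A : Matrix (Fin ℓ) (Fin ℓ) ℂ :=
      Matrix.of fun i j => if (i : ℕ) + (j : ℕ) + 1 = ℓ then 1 else 0
    -- constant coefficient of J^s_ℓ(μ): -μ on the main anti-diagonal, ones just above it
    let B : Matrix (Fin ℓ) (Fin ℓ) ℂ :=
      Matrix.of fun i j => if (i : ℕ) + (j : ℕ) + 1 = ℓ then -μ
        else if (i : ℕ) + (j : ℕ) + 2 = ℓ then 1 else 0
    let E : Matrix (Fin ℓ) (Fin ℓ) ℂ :=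
      Matrix.single ⟨ℓ - 1, by omega⟩ ⟨ℓ - 1, by omega⟩ 1
    Tendsto (fun m : ℕ => (A, B + (1 / (m : ℂ)) • E)) atTop (nhds (A, B)) ∧
    ∀ m : ℕ, 1 ≤ m →
      (Matrix.det (Matrix.of fun i j =>
          Polynomial.X * Polynomial.C (A i j) +
            Polynomial.C ((B + (1 / (m : ℂ)) • E) i j))).natDegree = ℓ ∧
      (Matrix.det (Matrix.of fun i j =>
          Polynomial.X * Polynomial.C (A i j) +
            Polynomial.C ((B + (1 / (m : ℂ)) • E) i j))).roots.toFinset.card = ℓ := by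
  intro A B E
  constructor
  · -- Tendsto
    have h0 : Tendsto (fun m : ℕ => (1 / (m : ℂ))) atTop (nhds 0) := by
      have h1 := tendsto_one_div_atTop_nhds_zero_nat (𝕜 := ℝ)
      have h2 := (Complex.continuous_ofReal.tendsto 0).comp h1
      have h3 : (fun n : ℕ => ((1 / (n : ℝ) : ℝ) : ℂ)) = fun n : ℕ => 1 / (n : ℂ) := by
        funext n; push_cast; ring
      rw [Function.comp_def, h3] at h2
      simpa using h2
    have hB : Tendsto (fun m : ℕ => B + (1 / (m : ℂ)) • E) atTop (nhds B) := by
      have h4 := h0.smul_const E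
      rw [zero_smul] at h4
      have h5 : Tendsto (fun _ : ℕ => B) atTop (nhds B) := tendsto_const_nhds
      simpa using h5.add h4
    exact Tendsto.prodMk_nhds tendsto_const_nhds hB
  · intro m hm
    have hm0 : (1 / (m : ℂ)) ≠ 0 := by
      simp only [ne_eq, one_div, inv_eq_zero, Nat.cast_eq_zero]
      omega
    obtain ⟨n, rfl⟩ : ∃ n, ℓ = n + 1 := ⟨ℓ - 1, by omega⟩
    set c0 : ℂ := 1 / (m : ℂ) with hc0
    set P : Matrix (Fin (n+1)) (Fin (n+1)) (Polynomial ℂ) :=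
      Matrix.of fun i j => X * C (A i j) + C ((B + c0 • E) i j) with hP
    have key : P.submatrix id (Fin.revPerm : Equiv.Perm (Fin (n+1))) =
        Matrix.of fun i j : Fin (n+1) =>
          (if (i : ℕ) = (j : ℕ) then X - C μ else if (i : ℕ) + 1 = (j : ℕ) then 1 else 0) +
          (if (i : ℕ) = n ∧ (j : ℕ) = 0 then C c0 else 0) := by
      ext i j : 2
      have hi : (i : ℕ) ≤ n := Fin.is_le i
      have hjn : (j : ℕ) ≤ n := Fin.is_le j
      have hrev : ((Fin.rev j : Fin (n+1)) : ℕ) = n - (j : ℕ) := by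
        rw [Fin.val_rev]; omega
      simp only [Matrix.submatrix_apply, id_eq, Fin.revPerm_apply, hP, Matrix.of_apply,
        Matrix.add_apply, Matrix.smul_apply, smul_eq_mul, A, B, E, Matrix.single,
        Fin.ext_iff]
      have e1 : ((i : ℕ) + ((Fin.rev j : Fin (n+1)) : ℕ) + 1 = n + 1) ↔ (i : ℕ) = (j : ℕ) := by
        rw [hrev]; omega
      have e2 : ((i : ℕ) + ((Fin.rev j : Fin (n+1)) : ℕ) + 2 = n + 1) ↔ (i : ℕ) + 1 = (j : ℕ) := by
        rw [hrev]; omega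
      have e3 : ((n + 1 - 1 = (i : ℕ)) ∧ (n + 1 - 1 = ((Fin.rev j : Fin (n+1)) : ℕ)))
          ↔ ((i : ℕ) = n ∧ (j : ℕ) = 0) := by
        rw [hrev]; omega
      simp only [e1, e2, e3]
      split_ifs <;>
        first
          | (exfalso; omega)
          | (simp only [C_add, C_neg, C_mul, C_1, C_0, mul_one, mul_zero, add_zero, zero_add]; try ring_nf)
    have hdp := Matrix.det_permute' (Fin.revPerm : Equiv.Perm (Fin (n+1))) P
    rw [key, aux_det_bidiag] at hdp
    have hq : (X - C μ) ^ (n+1) + (-1 : Polynomial ℂ) ^ n * C c0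
        = (X - C μ) ^ (n+1) + C ((-1 : ℂ) ^ n * c0) := by
      rw [C_mul, C_pow, C_neg, C_1]
    have ha : ((-1 : ℂ)) ^ n * c0 ≠ 0 := mul_ne_zero (pow_ne_zero _ (by norm_num)) hm0
    obtain ⟨hdeg, hcard⟩ := aux_poly (n+1) (by omega) μ _ ha
    rw [hq] at hdp
    rcases Int.units_eq_one_or (Equiv.Perm.sign (Fin.revPerm : Equiv.Perm (Fin (n+1)))) with hs | hs <;>
        rw [hs] at hdp
    · have hPq : P.det = (X - C μ) ^ (n+1) + C ((-1 : ℂ) ^ n * c0) := by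
        have h8 : (((1 : ℤˣ) : ℤ) : Polynomial ℂ) = 1 := by norm_num
        rw [h8, one_mul] at hdp
        exact hdp.symm
      rw [hPq]
      exact ⟨hdeg, hcard⟩
    · have hPq : P.det = -((X - C μ) ^ (n+1) + C ((-1 : ℂ) ^ n * c0)) := by
        have h9 : (((-1 : ℤˣ) : ℤ) : Polynomial ℂ) = -1 := by norm_num
        rw [h9, neg_one_mul] at hdp
        linear_combination hdp
      rw [hPq]
      constructor
      · rw [natDegree_neg]; exact hdeg
      · have hroots : (-((X - C μ) ^ (n+1) + C ((-1 : ℂ) ^ n * c0))).roots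
            = ((X - C μ) ^ (n+1) + C ((-1 : ℂ) ^ n * c0)).roots := by
          rw [show (-((X - C μ) ^ (n+1) + C ((-1 : ℂ) ^ n * c0)))
              = C (-1 : ℂ) * ((X - C μ) ^ (n+1) + C ((-1 : ℂ) ^ n * c0)) by
            simp [neg_one_mul]
          ]
          exact roots_C_mul _ (by norm_num)
        rw [hroots]
        exact hcard
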